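/- For every integer ℓ ≥ 1, B_{ℓ,0}(x) = (f_ee(x)+f_en(x))·f_en(x)^{ℓ−1}·(f_nn(x)+f_en(x)), and for every integer r ≥ 1, B_{0,r}(x) = (f_nn(x)+f_en(x))·f_en(x)^{r−1}·(f_ee(x)+f_en(x)). -/

import Mathlib

/-!
Lattice paths with unit East (`true`) and unit North (`false`) steps,
bounces with respect to the line `y = (β/α)·x`, and the associated
generating functions over `ℚ`.
-/

/-- A lattice path is a list of unit steps: `true` = East, `false` = North. -/
abbrev LatticePath := List Bool

/-- `p` is a lattice path from `(0,0)` to `(α*k, β*k)`, i.e. a member of `L_{β/α}(k)`. -/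
def InL (α β k : ℕ) (p : LatticePath) : Prop :=
  p.count true = α * k ∧ p.count false = β * k

/-- `p` has a left bounce at step index `i`: step `i` is an E-step, step `i+1` is an
N-step, and their common endpoint (the point reached after `i+1` steps) lies on the
line `y = (β/α)·x`, i.e. `α·y = β·x`. -/
def IsLeftBounce (α β : ℕ) (p : LatticePath) (i : ℕ) : Prop :=
  p[i]? = some true ∧ p[i + 1]? = some false ∧
    α * ((p.take (i + 1)).count false) = β * ((p.take (i + 1)).count true)

/-- `p` has a right bounce at step index `i`: step `i` is an N-step, step `i+1` is an
E-step, and their common endpoint lies on the line `y = (β/α)·x`. -/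
def IsRightBounce (α β : ℕ) (p : LatticePath) (i : ℕ) : Prop :=
  p[i]? = some false ∧ p[i + 1]? = some true ∧
    α * ((p.take (i + 1)).count false) = β * ((p.take (i + 1)).count true)

/-- The number of left bounces of `p` with respect to the line `y = (β/α)·x`. -/
noncomputable def leftBounces (α β : ℕ) (p : LatticePath) : ℕ :=
  {i | IsLeftBounce α β p i}.ncard

/-- The number of right bounces of `p` with respect to the line `y = (β/α)·x`. -/
noncomputable def rightBounces (α β : ℕ) (p : LatticePath) : ℕ :=
  {i | IsRightBounce α β p i}.ncard

/-- `p` is bounce-free: it has no left and no right bounces. -/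
def BounceFree (α β : ℕ) (p : LatticePath) : Prop :=
  (∀ i, ¬ IsLeftBounce α β p i) ∧ (∀ i, ¬ IsRightBounce α β p i)

/-- The first step of `p` is `a`. -/
def FirstStep (p : LatticePath) (a : Bool) : Prop := p.head? = some a

/-- The last step of `p` is `b`. -/
def LastStep (p : LatticePath) (b : Bool) : Prop := p.getLast? = some b

/-- The generating function `Σ_{k≥1} |S k|·xᵏ ∈ ℚ[[x]]` of a family of path sets. -/
noncomputable def gfOf (S : ℕ → Set LatticePath) : PowerSeries ℚ :=
  PowerSeries.mk fun k => if k = 0 then 0 else ((S k).ncard : ℚ)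

/-- `g(x) = Σ_{k≥1} C((α+β)k, αk)·xᵏ`, counting all paths in `L_{β/α}(k)`. -/
noncomputable def gSer (α β : ℕ) : PowerSeries ℚ :=
  PowerSeries.mk fun k => if k = 0 then 0 else ((((α + β) * k).choose (α * k) : ℕ) : ℚ)

/-- `g_ee(x) = Σ_{k≥1} C((α+β)k−2, αk−2)·xᵏ`, counting EE-paths in `L_{β/α}(k)`.
We write the lower index as `βk = ((α+β)k−2) − (αk−2)`, which equals
`C((α+β)k−2, αk−2)` by the symmetry of binomial coefficients and correctly
implements the convention `C(n, −1) = 0` (needed when `αk = 1`), which ℕ-truncated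
subtraction would not. -/
noncomputable def geeSer (α β : ℕ) : PowerSeries ℚ :=
  PowerSeries.mk fun k => if k = 0 then 0 else ((((α + β) * k - 2).choose (β * k) : ℕ) : ℚ)

/-- `g_en(x) = Σ_{k≥1} C((α+β)k−2, αk−1)·xᵏ`, counting EN-paths in `L_{β/α}(k)`. -/
noncomputable def genSer (α β : ℕ) : PowerSeries ℚ :=
  PowerSeries.mk fun k => if k = 0 then 0 else ((((α + β) * k - 2).choose (α * k - 1) : ℕ) : ℚ)

/-- `g_nn(x) = Σ_{k≥1} C((α+β)k−2, αk)·xᵏ`, counting NN-paths in `L_{β/α}(k)`. -/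
noncomputable def gnnSer (α β : ℕ) : PowerSeries ℚ :=
  PowerSeries.mk fun k => if k = 0 then 0 else ((((α + β) * k - 2).choose (α * k) : ℕ) : ℚ)

/-- `f_ee(x)`: generating function of bounce-free EE-paths in `L_{β/α}(k)`. -/
noncomputable def feeSer (α β : ℕ) : PowerSeries ℚ :=
  gfOf fun k => {p | InL α β k p ∧ BounceFree α β p ∧ FirstStep p true ∧ LastStep p true}

/-- `f_en(x)`: generating function of bounce-free EN-paths in `L_{β/α}(k)`. -/
noncomputable def fenSer (α β : ℕ) : PowerSeries ℚ :=
  gfOf fun k => {p | InL α β k p ∧ BounceFree α β p ∧ FirstStep p true ∧ LastStep p false}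

/-- `f_nn(x)`: generating function of bounce-free NN-paths in `L_{β/α}(k)`. -/
noncomputable def fnnSer (α β : ℕ) : PowerSeries ℚ :=
  gfOf fun k => {p | InL α β k p ∧ BounceFree α β p ∧ FirstStep p false ∧ LastStep p false}

/-- `f(x)`: generating function of all bounce-free paths in `L_{β/α}(k)`. -/
noncomputable def fSer (α β : ℕ) : PowerSeries ℚ :=
  gfOf fun k => {p | InL α β k p ∧ BounceFree α β p}

/-- `B_{ℓ,r}(x)`: generating function of paths in `L_{β/α}(k)` with exactly `ℓ`
left bounces and exactly `r` right bounces. -/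
noncomputable def BSer (α β ℓ r : ℕ) : PowerSeries ℚ :=
  gfOf fun k => {p | InL α β k p ∧ leftBounces α β p = ℓ ∧ rightBounces α β p = r}

/-- The Fuss–Catalan generating function `c_α(x) = Σ_{k≥0} 1/(αk+1)·C((α+1)k, k)·xᵏ`. -/
noncomputable def fussCatalan (α : ℕ) : PowerSeries ℚ :=
  PowerSeries.mk fun k => (1 / ((α * k + 1 : ℕ) : ℚ)) * ((((α + 1) * k).choose k : ℕ) : ℚ)

/-- For slope `1/α`: `p` has a horizontal cross at the lattice point `(α*i, i)` (`i ≥ 1`):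
`p` passes through `(α*i, i)` (so the prefix of length `(α+1)*i` has exactly `α*i`
E-steps), and both the step ending there and the step starting there are E-steps. -/
def HasHCrossAt (α : ℕ) (p : LatticePath) (i : ℕ) : Prop :=
  1 ≤ i ∧ (p.take ((α + 1) * i)).count true = α * i ∧
    p[(α + 1) * i - 1]? = some true ∧ p[(α + 1) * i]? = some true

/-- `p` has no horizontal crosses with respect to the line `y = x/α`. -/
def NoHCross (α : ℕ) (p : LatticePath) : Prop := ∀ i, ¬ HasHCrossAt α p i

-- generic bounce
def IsB (α β : ℕ) (a : Bool) (p : LatticePath) (i : ℕ) : Prop :=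
  p[i]? = some a ∧ p[i + 1]? = some (!a) ∧
    α * ((p.take (i + 1)).count false) = β * ((p.take (i + 1)).count true)

lemma isB_true {α β p i} : IsB α β true p i ↔ IsLeftBounce α β p i := Iff.rfl
lemma isB_false {α β p i} : IsB α β false p i ↔ IsRightBounce α β p i := Iff.rfl

lemma length_count (p : LatticePath) : p.length = p.count true + p.count false := by
  induction p with
  | nil => simp
  | cons a l ih =>
    rw [List.length_cons, List.count_cons, List.count_cons, ih]
    cases a <;> simp <;> omega

lemma lenB {α β : ℕ} {a : Bool} {p : LatticePath} {i : ℕ} (h : IsB α β a p i) :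
    i + 1 < p.length := by
  by_contra h'
  push_neg at h'
  have := h.2.1
  rw [List.getElem?_eq_none h'] at this
  cases this

lemma finite_IsB (α β : ℕ) (a : Bool) (p : LatticePath) : {i | IsB α β a p i}.Finite :=
  (Set.finite_Iio p.length).subset fun i hi => lt_of_le_of_lt (Nat.le_succ i) (lenB hi)

lemma finite_lb (α β : ℕ) (p : LatticePath) : {i | IsLeftBounce α β p i}.Finite :=
  finite_IsB α β true p

lemma finite_rb (α β : ℕ) (p : LatticePath) : {i | IsRightBounce α β p i}.Finite :=
  finite_IsB α β false p

lemma bounceFree_iff {α β : ℕ} {p : LatticePath} :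
    BounceFree α β p ↔ leftBounces α β p = 0 ∧ rightBounces α β p = 0 := by
  rw [leftBounces, rightBounces, Set.ncard_eq_zero (finite_lb α β p),
    Set.ncard_eq_zero (finite_rb α β p)]
  simp [BounceFree, Set.eq_empty_iff_forall_notMem]

lemma finite_paths (α β k : ℕ) (P : LatticePath → Prop) :
    {p : LatticePath | InL α β k p ∧ P p}.Finite := by
  apply (List.finite_length_eq Bool (α * k + β * k)).subset
  rintro p ⟨⟨h1, h2⟩, -⟩
  show p.length = _
  rw [length_count, h1, h2]

lemma line_point {α β : ℕ} (hα : 0 < α) (hcop : Nat.Coprime α β) {e n : ℕ}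
    (h : α * n = β * e) : ∃ m, e = α * m ∧ n = β * m := by
  have hd : α ∣ e := hcop.dvd_of_dvd_mul_left ⟨n, h.symm⟩
  obtain ⟨m, rfl⟩ := hd
  refine ⟨m, rfl, ?_⟩
  have : α * n = α * (β * m) := by rw [h]; ring
  exact Nat.eq_of_mul_eq_mul_left hα this

section Append
variable {α β m : ℕ} {q r : LatticePath}

lemma length_of_InL (h : InL α β m q) : q.length = α * m + β * m := by
  rw [length_count, h.1, h.2]

lemma isB_append_low {a : Bool} {t : ℕ} (ht : t + 1 < q.length) :
    IsB α β a (q ++ r) t ↔ IsB α β a q t := by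
  have h1 : t < q.length := lt_of_le_of_lt (Nat.le_succ t) ht
  unfold IsB
  rw [List.getElem?_append, if_pos h1, List.getElem?_append, if_pos ht,
    List.take_append, Nat.sub_eq_zero_of_le (le_of_lt ht),
    List.take_zero, List.append_nil]

lemma isB_append_high (hq : InL α β m q) {a : Bool} (t : ℕ) :
    IsB α β a (q ++ r) (q.length + t) ↔ IsB α β a r t := by
  unfold IsB
  have e1 : (q ++ r)[q.length + t]? = r[t]? := by
    rw [List.getElem?_append_right (Nat.le_add_right _ _), Nat.add_sub_cancel_left]
  have e2 : (q ++ r)[q.length + t + 1]? = r[t + 1]? := by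
    rw [show q.length + t + 1 = q.length + (t + 1) by ring,
      List.getElem?_append_right (Nat.le_add_right _ _), Nat.add_sub_cancel_left]
  have e3 : (q ++ r).take (q.length + t + 1) = q ++ r.take (t + 1) := by
    rw [show q.length + t + 1 = q.length + (t + 1) by ring, List.take_append,
      List.take_of_length_le (by omega), Nat.add_sub_cancel_left]
  rw [e1, e2, e3, List.count_append, List.count_append, hq.1, hq.2,
    Nat.mul_add, Nat.mul_add, show α * (β * m) = β * (α * m) by ring, add_right_inj]

lemma ne_nil_of_last {b : Bool} (h : LastStep q b) : q ≠ [] := by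
  intro hq; rw [hq] at h; simp [LastStep] at h

lemma length_pos_of_last {b : Bool} (h : LastStep q b) : 0 < q.length :=
  List.length_pos_iff.2 (ne_nil_of_last h)

lemma isB_boundary (hq : InL α β m q) (hlast : LastStep q true) (hfirst : FirstStep r false) :
    IsB α β true (q ++ r) (q.length - 1) := by
  have hpos : 0 < q.length := length_pos_of_last hlast
  have h1 : q.length - 1 + 1 = q.length := Nat.succ_pred_eq_of_pos hpos
  refine ⟨?_, ?_, ?_⟩
  · rw [List.getElem?_append, if_pos (by omega : q.length - 1 < q.length)]
    rw [LastStep, List.getLast?_eq_getElem?] at hlast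
    exact hlast
  · rw [h1, List.getElem?_append_right le_rfl, Nat.sub_self, ← List.head?_eq_getElem?]
    exact hfirst
  · rw [h1, List.take_left, hq.1, hq.2]; ring

/-- Structure of bounce sets of a glued path. -/
lemma glue_left_set (hq : InL α β m q) (hbf : BounceFree α β q)
    (hlast : LastStep q true) (hfirst : FirstStep r false) :
    {i | IsLeftBounce α β (q ++ r) i}
      = insert (q.length - 1) ((· + q.length) '' {j | IsLeftBounce α β r j}) := by
  have hpos : 0 < q.length := length_pos_of_last hlast
  ext i
  simp only [Set.mem_setOf_eq, Set.mem_insert_iff, Set.mem_image]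
  constructor
  · intro hi
    rcases lt_trichotomy (i + 1) q.length with h | h | h
    · exact absurd ((isB_append_low h).1 hi) (hbf.1 i)
    · left; omega
    · right
      refine ⟨i - q.length, ?_, by omega⟩
      have : IsB α β true (q ++ r) (q.length + (i - q.length)) := by
        rwa [show q.length + (i - q.length) = i by omega]
      exact (isB_append_high hq _).1 this
  · rintro (rfl | ⟨j, hj, rfl⟩)
    · exact isB_boundary hq hlast hfirst
    · have := (isB_append_high hq j).2 hj
      rwa [Nat.add_comm] at this

lemma glue_right_set (hq : InL α β m q) (hbf : BounceFree α β q)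
    (hlast : LastStep q true) (hfirst : FirstStep r false) :
    {i | IsRightBounce α β (q ++ r) i}
      = (· + q.length) '' {j | IsRightBounce α β r j} := by
  have hpos : 0 < q.length := length_pos_of_last hlast
  ext i
  simp only [Set.mem_setOf_eq, Set.mem_image]
  constructor
  · intro hi
    rcases lt_trichotomy (i + 1) q.length with h | h | h
    · exact absurd ((isB_append_low h).1 hi) (hbf.2 i)
    · exfalso
      have hb := isB_boundary hq hlast hfirst
      have : i = q.length - 1 := by omega
      rw [this] at hi
      have := hi.1
      rw [hb.1] at this
      exact Bool.noConfusion (Option.some.inj this)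
    · refine ⟨i - q.length, ?_, by omega⟩
      have : IsB α β false (q ++ r) (q.length + (i - q.length)) := by
        rwa [show q.length + (i - q.length) = i by omega]
      exact (isB_append_high hq _).1 this
  · rintro ⟨j, hj, rfl⟩
    have := (isB_append_high hq j).2 hj
    rwa [Nat.add_comm] at this

lemma glue_leftBounces (hq : InL α β m q) (hbf : BounceFree α β q)
    (hlast : LastStep q true) (hfirst : FirstStep r false) :
    leftBounces α β (q ++ r) = leftBounces α β r + 1 := by
  have hpos : 0 < q.length := length_pos_of_last hlast
  rw [leftBounces, glue_left_set hq hbf hlast hfirst,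
    Set.ncard_insert_of_notMem ?_ ?_, Set.ncard_image_of_injective _ (add_left_injective _)]
  · rfl
  · rintro ⟨j, -, hj⟩; dsimp only at hj; omega
  · exact ((finite_lb α β r).image _)

lemma glue_rightBounces (hq : InL α β m q) (hbf : BounceFree α β q)
    (hlast : LastStep q true) (hfirst : FirstStep r false) :
    rightBounces α β (q ++ r) = rightBounces α β r := by
  rw [rightBounces, glue_right_set hq hbf hlast hfirst,
    Set.ncard_image_of_injective _ (add_left_injective _)]
  rfl

lemma glue_sInf (hq : InL α β m q) (hbf : BounceFree α β q)
    (hlast : LastStep q true) (hfirst : FirstStep r false) :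
    sInf {i | IsLeftBounce α β (q ++ r) i} = q.length - 1 := by
  rw [glue_left_set hq hbf hlast hfirst]
  have hpos : 0 < q.length := length_pos_of_last hlast
  apply le_antisymm
  · exact Nat.sInf_le (Set.mem_insert _ _)
  · apply le_csInf ⟨_, Set.mem_insert _ _⟩
    rintro b (rfl | ⟨j, -, rfl⟩)
    · omega
    · dsimp only; omega

end Append

section Split
variable {α β : ℕ}

/-- Splitting a path with at least one left bounce and no right bounce at its first
left bounce. -/
lemma split_exists (hα : 0 < α) (hcop : Nat.Coprime α β) {k ℓ : ℕ} {p : LatticePath}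
    (hp : InL α β k p) (hl : leftBounces α β p = ℓ + 1) (hr : rightBounces α β p = 0) :
    ∃ m, m ≤ k ∧ ∃ q r : LatticePath, p = q ++ r ∧
      InL α β m q ∧ BounceFree α β q ∧ LastStep q true ∧
      InL α β (k - m) r ∧ leftBounces α β r = ℓ ∧ rightBounces α β r = 0 ∧
      FirstStep r false := by
  have hne : {i | IsLeftBounce α β p i}.Nonempty :=
    Set.nonempty_of_ncard_ne_zero (by rw [← leftBounces, hl]; omega)
  set i₀ := sInf {i | IsLeftBounce α β p i} with hi₀
  have h₀ : IsLeftBounce α β p i₀ := Nat.sInf_mem hne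
  have hlen : i₀ + 1 < p.length := lenB h₀
  obtain ⟨m, hm1, hm2⟩ := line_point hα hcop h₀.2.2
  set q := p.take (i₀ + 1) with hqdef
  set r := p.drop (i₀ + 1) with hrdef
  have hpqr : p = q ++ r := (List.take_append_drop _ _).symm
  have hqlen : q.length = i₀ + 1 := by
    rw [hqdef, List.length_take]; omega
  have hq : InL α β m q := ⟨hm1, hm2⟩
  have hi₀m : i₀ + 1 = α * m + β * m := by
    rw [← hqlen, length_count, hq.1, hq.2]
  -- q ends with an E-step
  have hlast : LastStep q true := by
    rw [LastStep, List.getLast?_eq_getElem?, hqlen, Nat.add_sub_cancel, hqdef,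
      List.getElem?_take]
    rw [if_pos (Nat.lt_succ_self _)]
    exact h₀.1
  -- r starts with an N-step
  have hfirst : FirstStep r false := by
    rw [FirstStep, List.head?_eq_getElem?, hrdef, List.getElem?_drop, Nat.add_zero]
    exact h₀.2.1
  -- no right bounces of p at all
  have hrset : {i | IsRightBounce α β p i} = ∅ :=
    (Set.ncard_eq_zero (finite_rb α β p)).1 hr
  -- q is bounce-free
  have hbf : BounceFree α β q := by
    constructor
    · intro t ht
      have htl : t + 1 < q.length := lenB ht
      have : IsLeftBounce α β p t := by
        rw [hpqr]; exact (isB_append_low htl).2 ht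
      have h5 : i₀ ≤ t :=
        Nat.sInf_le (show t ∈ {i | IsLeftBounce α β p i} from this)
      omega
    · intro t ht
      have htl : t + 1 < q.length := lenB ht
      have : IsRightBounce α β p t := by
        rw [hpqr]; exact (isB_append_low htl).2 ht
      rw [Set.eq_empty_iff_forall_notMem] at hrset
      exact hrset t this
  -- m ≤ k
  have hmk : m ≤ k := by
    have h1 : α * m ≤ α * k := by
      rw [← hm1, ← hp.1, hqdef]
      exact (List.take_sublist _ _).count_le _
    exact Nat.le_of_mul_le_mul_left h1 hα
  -- r is in L(k-m)
  have hrL : InL α β (k - m) r := by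
    have e1 : p.count true = q.count true + r.count true := by rw [hpqr, List.count_append]
    have e2 : p.count false = q.count false + r.count false := by rw [hpqr, List.count_append]
    have e3 : α * m + α * (k - m) = α * k := by rw [← Nat.mul_add, Nat.add_sub_cancel' hmk]
    have e4 : β * m + β * (k - m) = β * k := by rw [← Nat.mul_add, Nat.add_sub_cancel' hmk]
    constructor
    · have := hp.1; rw [e1, hq.1] at this; omega
    · have := hp.2; rw [e2, hq.2] at this; omega
  -- bounce counts of r
  have hlr : leftBounces α β r = ℓ := by
    have := glue_leftBounces hq hbf hlast hfirst
    rw [← hpqr, hl] at this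
    omega
  have hrr : rightBounces α β r = 0 := by
    have := glue_rightBounces hq hbf hlast hfirst
    rw [← hpqr, hr] at this
    omega
  exact ⟨m, hmk, q, r, hpqr, hq, hbf, hlast, hrL, hlr, hrr, hfirst⟩

end Split

section Cards

lemma ncard_prod (S T : Set LatticePath) : (S ×ˢ T).ncard = S.ncard * T.ncard := by
  rw [← Nat.card_coe_set_eq, ← Nat.card_coe_set_eq, ← Nat.card_coe_set_eq,
    ← Nat.card_prod]
  exact Nat.card_congr (Equiv.Set.prod S T)

lemma ncard_biUnion {s : Finset ℕ} {f : ℕ → Set LatticePath} (hf : ∀ i ∈ s, (f i).Finite)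
    (hd : ∀ i ∈ s, ∀ j ∈ s, i ≠ j → Disjoint (f i) (f j)) :
    (⋃ i ∈ s, f i).ncard = ∑ i ∈ s, (f i).ncard := by
  classical
  induction s using Finset.induction_on with
  | empty => simp
  | @insert a s ha ih =>
    rw [Finset.set_biUnion_insert, Finset.sum_insert ha,
      ← ih (fun i hi => hf i (Finset.mem_insert_of_mem hi))
        (fun i hi j hj hij =>
          hd i (Finset.mem_insert_of_mem hi) j (Finset.mem_insert_of_mem hj) hij)]
    apply Set.ncard_union_eq
    · rw [Set.disjoint_iUnion_right]; intro i; rw [Set.disjoint_iUnion_right]; intro hi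
      exact hd a (Finset.mem_insert_self a s) i (Finset.mem_insert_of_mem hi)
        (by rintro rfl; exact ha hi)
    · exact hf a (Finset.mem_insert_self a s)
    · exact Set.Finite.biUnion s.finite_toSet
        (fun i hi => hf i (Finset.mem_insert_of_mem hi))

end Cards

/-- bounce-free paths ending with E, with head condition `A`. -/
def QSet (α β : ℕ) (A : Set LatticePath) (m : ℕ) : Set LatticePath :=
  {q | InL α β m q ∧ BounceFree α β q ∧ LastStep q true ∧ q ∈ A}

/-- paths with `ℓ` left bounces, no right bounces, starting with N. -/
def TSet (α β ℓ k : ℕ) : Set LatticePath :=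
  {r | InL α β k r ∧ leftBounces α β r = ℓ ∧ rightBounces α β r = 0 ∧ FirstStep r false}

lemma finite_QSet (α β : ℕ) (A : Set LatticePath) (m : ℕ) : (QSet α β A m).Finite := by
  apply (finite_paths α β m (fun q => BounceFree α β q ∧ LastStep q true ∧ q ∈ A)).subset
  rintro q ⟨h1, h2, h3, h4⟩; exact ⟨h1, h2, h3, h4⟩

lemma finite_TSet (α β ℓ k : ℕ) : (TSet α β ℓ k).Finite := by
  apply (finite_paths α β k
    (fun r => leftBounces α β r = ℓ ∧ rightBounces α β r = 0 ∧ FirstStep r false)).subset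
  rintro r ⟨h1, h2, h3, h4⟩; exact ⟨h1, h2, h3, h4⟩

section MainSplit
variable {α β : ℕ}

/-- gluing: full characterization of the image. -/
lemma glue_mem {A : Set LatticePath} {m ℓ k : ℕ} (hmk : m ≤ k)
    (hA : ∀ q r : LatticePath, q ≠ [] → (q ++ r ∈ A ↔ q ∈ A))
    {q r : LatticePath} (hq : q ∈ QSet α β A m) (hr : r ∈ TSet α β ℓ (k - m)) :
    InL α β k (q ++ r) ∧ leftBounces α β (q ++ r) = ℓ + 1 ∧
      rightBounces α β (q ++ r) = 0 ∧ (q ++ r) ∈ A := by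
  obtain ⟨hqL, hqbf, hqlast, hqA⟩ := hq
  obtain ⟨hrL, hrl, hrr, hrfirst⟩ := hr
  have e3 : α * m + α * (k - m) = α * k := by rw [← Nat.mul_add, Nat.add_sub_cancel' hmk]
  have e4 : β * m + β * (k - m) = β * k := by rw [← Nat.mul_add, Nat.add_sub_cancel' hmk]
  refine ⟨⟨?_, ?_⟩, ?_, ?_, ?_⟩
  · rw [List.count_append, hqL.1, hrL.1, e3]
  · rw [List.count_append, hqL.2, hrL.2, e4]
  · rw [glue_leftBounces hqL hqbf hqlast hrfirst, hrl]
  · rw [glue_rightBounces hqL hqbf hqlast hrfirst, hrr]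
  · exact (hA q r (ne_nil_of_last hqlast)).2 hqA

lemma card_split (hα : 0 < α) (hcop : Nat.Coprime α β)
    (A : Set LatticePath) (hA : ∀ q r : LatticePath, q ≠ [] → (q ++ r ∈ A ↔ q ∈ A))
    (ℓ k : ℕ) :
    {p : LatticePath | InL α β k p ∧ leftBounces α β p = ℓ + 1 ∧
        rightBounces α β p = 0 ∧ p ∈ A}.ncard
      = ∑ m ∈ Finset.range (k + 1), (QSet α β A m).ncard * (TSet α β ℓ (k - m)).ncard := by
  classical
  set f : LatticePath × LatticePath → LatticePath := fun z => z.1 ++ z.2 with hf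
  set g : ℕ → Set LatticePath := fun m => f '' (QSet α β A m ×ˢ TSet α β ℓ (k - m)) with hg
  -- sInf of the left-bounce set of an element of `g m`
  have hsInf : ∀ m : ℕ, ∀ p ∈ g m,
      sInf {i | IsLeftBounce α β p i} = α * m + β * m - 1 ∧ 1 ≤ α * m + β * m := by
    rintro m p ⟨⟨q, r⟩, ⟨⟨hqL, hqbf, hqlast, -⟩, ⟨-, -, -, hrfirst⟩⟩, rfl⟩
    have h1 := glue_sInf hqL hqbf hqlast hrfirst
    have h2 := length_of_InL hqL
    have h3 := length_pos_of_last hqlast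
    constructor
    · rw [h1, h2]
    · omega
  -- the union decomposition
  have hU : {p : LatticePath | InL α β k p ∧ leftBounces α β p = ℓ + 1 ∧
      rightBounces α β p = 0 ∧ p ∈ A} = ⋃ m ∈ Finset.range (k + 1), g m := by
    ext p
    simp only [Set.mem_setOf_eq, Set.mem_iUnion, Finset.mem_range]
    constructor
    · rintro ⟨hp, hl, hr, hAp⟩
      obtain ⟨m, hmk, q, r, rfl, hq, hbf, hlast, hrL, hlr, hrr, hfirst⟩ :=
        split_exists hα hcop hp hl hr
      refine ⟨m, by omega, (q, r), ⟨⟨hq, hbf, hlast, ?_⟩, hrL, hlr, hrr, hfirst⟩, rfl⟩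
      exact (hA q r (ne_nil_of_last hlast)).1 hAp
    · rintro ⟨m, hm, ⟨q, r⟩, ⟨hq, hr⟩, rfl⟩
      exact glue_mem (by omega) hA hq hr
  rw [hU, ncard_biUnion]
  · refine Finset.sum_congr rfl fun m hm => ?_
    rw [hg]
    have hinj : Set.InjOn f (QSet α β A m ×ˢ TSet α β ℓ (k - m)) := by
      rintro ⟨q₁, r₁⟩ ⟨hq₁, -⟩ ⟨q₂, r₂⟩ ⟨hq₂, -⟩ heq
      have hlen : q₁.length = q₂.length := by
        rw [length_of_InL hq₁.1, length_of_InL hq₂.1]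
      obtain ⟨h1, h2⟩ := List.append_inj heq hlen
      exact Prod.ext h1 h2
    rw [Set.ncard_image_of_injOn hinj, ncard_prod]
  · intro m hm
    exact (((finite_QSet α β A m).prod (finite_TSet α β ℓ (k - m))).image f)
  · intro i hi j hj hij
    rw [Set.disjoint_left]
    intro p hpi hpj
    obtain ⟨e1, e2⟩ := hsInf i p hpi
    obtain ⟨e3, e4⟩ := hsInf j p hpj
    have e5 : α * i + β * i = α * j + β * j := by omega
    have : (α + β) * i = (α + β) * j := by
      rw [Nat.add_mul, Nat.add_mul]; exact e5
    exact hij (Nat.eq_of_mul_eq_mul_left (by omega) this)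

end MainSplit

section Reverse
variable {α β : ℕ}

lemma isB_reverse {p : LatticePath} (h : α * p.count false = β * p.count true)
    {a : Bool} {i : ℕ} (hb : IsB α β a p i) :
    IsB α β (!a) p.reverse (p.length - 2 - i) := by
  have hi : i + 1 < p.length := lenB hb
  set L := p.length with hL
  set j := L - 2 - i with hj
  have hjL : j < L := by omega
  have hj1L : j + 1 < L := by omega
  have e0 : L - 1 - j = i + 1 := by omega
  have e1 : p.reverse[j]? = p[i + 1]? := by
    rw [List.getElem?_reverse (by omega), ← hL, e0]
  have e2 : p.reverse[j + 1]? = p[i]? := by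
    rw [List.getElem?_reverse (by omega), ← hL, show L - 1 - (j + 1) = i by omega]
  have e3 : p.reverse.take (j + 1) = (p.drop (i + 1)).reverse := by
    rw [List.take_reverse, ← hL, show L - (j + 1) = i + 1 by omega]
  have hcnt : ∀ b : Bool, (p.take (i + 1)).count b + (p.drop (i + 1)).count b = p.count b := by
    intro b
    rw [← List.count_append, List.take_append_drop]
  have htle : ∀ b : Bool, (p.take (i + 1)).count b ≤ p.count b :=
    fun b => (List.take_sublist _ _).count_le b
  refine ⟨?_, ?_, ?_⟩
  · rw [e1]; exact hb.2.1
  · rw [e2, Bool.not_not]; exact hb.1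
  · rw [e3, List.count_reverse, List.count_reverse]
    have d1 : (p.drop (i + 1)).count false = p.count false - (p.take (i + 1)).count false := by
      have := hcnt false; omega
    have d2 : (p.drop (i + 1)).count true = p.count true - (p.take (i + 1)).count true := by
      have := hcnt true; omega
    rw [d1, d2, Nat.mul_sub, Nat.mul_sub, h, hb.2.2]

lemma isB_reverse_iff {p : LatticePath} (h : α * p.count false = β * p.count true)
    (a : Bool) :
    {i | IsB α β (!a) p.reverse i} = (fun i => p.length - 2 - i) '' {i | IsB α β a p i} := by
  have h' : α * p.reverse.count false = β * p.reverse.count true := by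
    rw [List.count_reverse, List.count_reverse]; exact h
  ext j
  simp only [Set.mem_setOf_eq, Set.mem_image]
  constructor
  · intro hj
    have hjl : j + 1 < p.length := by
      have := lenB hj; rwa [List.length_reverse] at this
    have := isB_reverse h' hj
    rw [List.reverse_reverse, Bool.not_not, List.length_reverse] at this
    exact ⟨p.length - 2 - j, this, by omega⟩
  · rintro ⟨i, hi, rfl⟩
    exact isB_reverse h hi

lemma bounce_count_reverse {p : LatticePath} (h : α * p.count false = β * p.count true)
    (a : Bool) :
    {i | IsB α β (!a) p.reverse i}.ncard = {i | IsB α β a p i}.ncard := by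
  rw [isB_reverse_iff h a]
  apply Set.ncard_image_of_injOn
  intro i₁ h₁ i₂ h₂ he
  have l₁ := lenB h₁
  have l₂ := lenB h₂
  dsimp only at he
  omega

lemma leftBounces_reverse {p : LatticePath} (h : α * p.count false = β * p.count true) :
    leftBounces α β p.reverse = rightBounces α β p :=
  bounce_count_reverse h false

lemma rightBounces_reverse {p : LatticePath} (h : α * p.count false = β * p.count true) :
    rightBounces α β p.reverse = leftBounces α β p :=
  bounce_count_reverse h true

lemma InL_reverse {k : ℕ} {p : LatticePath} : InL α β k p.reverse ↔ InL α β k p := by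
  unfold InL; rw [List.count_reverse, List.count_reverse]

lemma counts_of_InL {k : ℕ} {p : LatticePath} (hp : InL α β k p) :
    α * p.count false = β * p.count true := by
  rw [hp.1, hp.2]; ring

lemma bounceFree_reverse {p : LatticePath} (h : α * p.count false = β * p.count true) :
    BounceFree α β p.reverse ↔ BounceFree α β p := by
  rw [bounceFree_iff, bounceFree_iff, leftBounces_reverse h, rightBounces_reverse h]
  tauto

/-- transfer of ncard along reversal -/
lemma ncard_reverse (S T : Set LatticePath) (h : ∀ p : LatticePath, p ∈ S ↔ p.reverse ∈ T) :
    S.ncard = T.ncard := by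
  have himg : List.reverse '' S = T := by
    ext x
    simp only [Set.mem_image]
    constructor
    · rintro ⟨p, hp, rfl⟩; exact (h p).1 hp
    · intro hx; exact ⟨x.reverse, (h x.reverse).2 (by rwa [List.reverse_reverse]), List.reverse_reverse x⟩
  rw [← himg, Set.ncard_image_of_injective _ List.reverse_injective]

end Reverse

section GF

lemma gfOf_coeff (S : ℕ → Set LatticePath) (k : ℕ) :
    (PowerSeries.coeff k) (gfOf S) = if k = 0 then 0 else ((S k).ncard : ℚ) :=
  PowerSeries.coeff_mk _ _

lemma gfOf_ncard_congr {S T : ℕ → Set LatticePath}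
    (h : ∀ k, 0 < k → (S k).ncard = (T k).ncard) : gfOf S = gfOf T := by
  apply PowerSeries.ext
  intro k
  rw [gfOf_coeff, gfOf_coeff]
  rcases Nat.eq_zero_or_pos k with rfl | hk
  · simp
  · rw [if_neg hk.ne', if_neg hk.ne', h k hk]

lemma gfOf_congr {S T : ℕ → Set LatticePath} (h : ∀ k, 0 < k → S k = T k) :
    gfOf S = gfOf T :=
  gfOf_ncard_congr fun k hk => by rw [h k hk]

lemma gfOf_mul {S T U : ℕ → Set LatticePath} (hS0 : S 0 = ∅) (hT0 : T 0 = ∅)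
    (h : ∀ k, 0 < k →
      (U k).ncard = ∑ m ∈ Finset.range (k + 1), (S m).ncard * (T (k - m)).ncard) :
    gfOf U = gfOf S * gfOf T := by
  apply PowerSeries.ext
  intro k
  rw [PowerSeries.coeff_mul, Finset.Nat.sum_antidiagonal_eq_sum_range_succ_mk, gfOf_coeff]
  rcases Nat.eq_zero_or_pos k with rfl | hk
  · simp [gfOf_coeff]
  · rw [if_neg hk.ne', h k hk]
    push_cast
    refine Finset.sum_congr rfl fun m hm => ?_
    rw [gfOf_coeff, gfOf_coeff]
    by_cases h1 : m = 0
    · subst h1; simp [hS0]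
    by_cases h2 : k - m = 0
    · simp [h2, hT0]
    rw [if_neg h1, if_neg h2]

lemma gfOf_union {S T : ℕ → Set LatticePath} (hd : ∀ k, 0 < k → Disjoint (S k) (T k))
    (hS : ∀ k, (S k).Finite) (hT : ∀ k, (T k).Finite) :
    gfOf (fun k => S k ∪ T k) = gfOf S + gfOf T := by
  apply PowerSeries.ext
  intro k
  rw [map_add, gfOf_coeff, gfOf_coeff, gfOf_coeff]
  rcases Nat.eq_zero_or_pos k with rfl | hk
  · simp
  · rw [if_neg hk.ne', if_neg hk.ne', if_neg hk.ne',
      Set.ncard_union_eq (hd k hk) (hS k) (hT k)]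
    push_cast
    ring

end GF

section Assemble
variable {α β : ℕ}

lemma InL_zero {q : LatticePath} (h : InL α β 0 q) : q = [] := by
  have h1 := h.1
  have h2 := h.2
  rw [Nat.mul_zero] at h1 h2
  have := length_count q
  rw [h1, h2] at this
  exact List.eq_nil_of_length_eq_zero (by omega)

lemma QSet_zero (A : Set LatticePath) : QSet α β A 0 = ∅ := by
  ext q
  simp only [QSet, Set.mem_setOf_eq, Set.mem_empty_iff_false, iff_false]
  rintro ⟨h1, -, h3, -⟩
  exact ne_nil_of_last h3 (InL_zero h1)

lemma TSet_zero (ℓ : ℕ) : TSet α β ℓ 0 = ∅ := by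
  ext r
  simp only [TSet, Set.mem_setOf_eq, Set.mem_empty_iff_false, iff_false]
  rintro ⟨h1, -, -, h4⟩
  rw [InL_zero h1] at h4
  simp [FirstStep] at h4

lemma head?_append_ne_nil {q r : LatticePath} (hq : q ≠ []) :
    (q ++ r).head? = q.head? := by
  cases q with
  | nil => exact absurd rfl hq
  | cons a t => rfl

lemma hA_first (b : Bool) : ∀ q r : LatticePath, q ≠ [] →
    (q ++ r ∈ {p : LatticePath | FirstStep p b} ↔ q ∈ {p : LatticePath | FirstStep p b}) := by
  intro q r hq
  simp only [Set.mem_setOf_eq, FirstStep, head?_append_ne_nil hq]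

lemma hA_univ : ∀ q r : LatticePath, q ≠ [] →
    (q ++ r ∈ (Set.univ : Set LatticePath) ↔ q ∈ (Set.univ : Set LatticePath)) := by
  simp

end Assemble

section Atoms
variable {α β : ℕ}

/-- The set of bounce-free NE-paths, gf equals `fenSer` by reversal. -/
lemma gf_NE : gfOf (fun k =>
      {p : LatticePath | InL α β k p ∧ BounceFree α β p ∧ FirstStep p false ∧ LastStep p true})
    = fenSer α β := by
  apply gfOf_ncard_congr
  intro k hk
  apply ncard_reverse
  intro p
  simp only [Set.mem_setOf_eq]
  constructor
  · rintro ⟨h1, h2, h3, h4⟩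
    refine ⟨InL_reverse.2 h1, (bounceFree_reverse (counts_of_InL h1)).2 h2, ?_, ?_⟩
    · rw [FirstStep, List.head?_reverse]; exact h4
    · rw [LastStep, List.getLast?_reverse]; exact h3
  · rintro ⟨h1, h2, h3, h4⟩
    have h1' : InL α β k p := InL_reverse.1 h1
    refine ⟨h1', (bounceFree_reverse (counts_of_InL h1')).1 h2, ?_, ?_⟩
    · rw [FirstStep, ← List.getLast?_reverse]; exact h4
    · rw [LastStep, ← List.head?_reverse]; exact h3

lemma last_of_ne_nil {q : LatticePath} (hq : q ≠ []) : ∃ b, LastStep q b := by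
  have hl : 0 < q.length := List.length_pos_iff.2 hq
  refine ⟨q[q.length - 1], ?_⟩
  rw [LastStep, List.getLast?_eq_getElem?, List.getElem?_eq_getElem (by omega)]

lemma first_of_ne_nil {q : LatticePath} (hq : q ≠ []) : ∃ b, FirstStep q b := by
  have hl : 0 < q.length := List.length_pos_iff.2 hq
  refine ⟨q[0], ?_⟩
  rw [FirstStep, List.head?_eq_getElem?, List.getElem?_eq_getElem (by omega)]

lemma gf_QSet_univ : gfOf (QSet α β Set.univ) = feeSer α β + fenSer α β := by
  have hsplit : ∀ k, 0 < k → QSet α β Set.univ k =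
      {p : LatticePath | InL α β k p ∧ BounceFree α β p ∧ FirstStep p true ∧ LastStep p true} ∪
      {p : LatticePath | InL α β k p ∧ BounceFree α β p ∧ FirstStep p false ∧ LastStep p true} := by
    intro k hk
    ext q
    simp only [QSet, Set.mem_setOf_eq, Set.mem_union, Set.mem_univ, and_true]
    constructor
    · rintro ⟨h1, h2, h3⟩
      obtain ⟨b, hb⟩ := first_of_ne_nil (ne_nil_of_last h3)
      cases b
      · right; exact ⟨h1, h2, hb, h3⟩
      · left; exact ⟨h1, h2, hb, h3⟩
    · rintro (⟨h1, h2, h3, h4⟩ | ⟨h1, h2, h3, h4⟩) <;> exact ⟨h1, h2, h4⟩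
  rw [gfOf_congr hsplit, gfOf_union, feeSer, gf_NE]
  · intro k hk
    rw [Set.disjoint_left]
    rintro p ⟨-, -, h3, -⟩ ⟨-, -, h3', -⟩
    rw [FirstStep] at h3 h3'
    rw [h3] at h3'
    exact Bool.noConfusion (Option.some.inj h3')
  · intro k; exact finite_paths α β k _
  · intro k; exact finite_paths α β k _

lemma gf_TSet_zero : gfOf (TSet α β 0) = fnnSer α β + fenSer α β := by
  have hsplit : ∀ k, 0 < k → TSet α β 0 k =
      {p : LatticePath | InL α β k p ∧ BounceFree α β p ∧ FirstStep p false ∧ LastStep p false} ∪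
      {p : LatticePath | InL α β k p ∧ BounceFree α β p ∧ FirstStep p false ∧ LastStep p true} := by
    intro k hk
    ext q
    simp only [TSet, Set.mem_setOf_eq, Set.mem_union]
    constructor
    · rintro ⟨h1, h2, h3, h4⟩
      have hbf : BounceFree α β q := bounceFree_iff.2 ⟨h2, h3⟩
      have hne : q ≠ [] := by
        intro hq; rw [hq] at h4; simp [FirstStep] at h4
      obtain ⟨b, hb⟩ := last_of_ne_nil hne
      cases b
      · left; exact ⟨h1, hbf, h4, hb⟩
      · right; exact ⟨h1, hbf, h4, hb⟩
    · rintro (⟨h1, h2, h3, h4⟩ | ⟨h1, h2, h3, h4⟩) <;>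
        exact ⟨h1, (bounceFree_iff.1 h2).1, (bounceFree_iff.1 h2).2, h3⟩
  rw [gfOf_congr hsplit, gfOf_union, fnnSer, gf_NE]
  · intro k hk
    rw [Set.disjoint_left]
    rintro p ⟨-, -, -, h4⟩ ⟨-, -, -, h4'⟩
    rw [LastStep] at h4 h4'
    rw [h4] at h4'
    exact Bool.noConfusion (Option.some.inj h4')
  · intro k; exact finite_paths α β k _
  · intro k; exact finite_paths α β k _

lemma gf_QSet_first_false :
    gfOf (QSet α β {p : LatticePath | FirstStep p false}) = fenSer α β := by
  rw [← gf_NE]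
  apply gfOf_congr
  intro k hk
  ext q
  simp only [QSet, Set.mem_setOf_eq]
  tauto

lemma gf_TSet_succ (hα : 0 < α) (hcop : Nat.Coprime α β) (ℓ : ℕ) :
    gfOf (TSet α β (ℓ + 1)) = fenSer α β * gfOf (TSet α β ℓ) := by
  rw [← gf_QSet_first_false (α := α) (β := β)]
  apply gfOf_mul (QSet_zero _) (TSet_zero _)
  intro k hk
  exact card_split hα hcop _ (hA_first false) ℓ k

lemma gf_TSet (hα : 0 < α) (hcop : Nat.Coprime α β) (ℓ : ℕ) :
    gfOf (TSet α β ℓ) = fenSer α β ^ ℓ * (fnnSer α β + fenSer α β) := by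
  induction ℓ with
  | zero => rw [pow_zero, one_mul, gf_TSet_zero]
  | succ j ih => rw [gf_TSet_succ hα hcop, ih, pow_succ]; ring

lemma BSer_succ_zero (hα : 0 < α) (hcop : Nat.Coprime α β) (ℓ : ℕ) :
    BSer α β (ℓ + 1) 0 = (feeSer α β + fenSer α β) * gfOf (TSet α β ℓ) := by
  rw [← gf_QSet_univ (α := α) (β := β), BSer]
  apply gfOf_mul (QSet_zero _) (TSet_zero _)
  intro k hk
  have heq : {p : LatticePath | InL α β k p ∧ leftBounces α β p = ℓ + 1 ∧
      rightBounces α β p = 0} =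
      {p : LatticePath | InL α β k p ∧ leftBounces α β p = ℓ + 1 ∧
        rightBounces α β p = 0 ∧ p ∈ (Set.univ : Set LatticePath)} := by
    ext p; simp
  rw [heq]
  exact card_split hα hcop _ hA_univ ℓ k

lemma BSer_swap (ℓ r : ℕ) : BSer α β ℓ r = BSer α β r ℓ := by
  apply gfOf_ncard_congr
  intro k hk
  apply ncard_reverse
  intro p
  simp only [Set.mem_setOf_eq]
  constructor
  · rintro ⟨h1, h2, h3⟩
    refine ⟨InL_reverse.2 h1, ?_, ?_⟩
    · rw [leftBounces_reverse (counts_of_InL h1), h3]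
    · rw [rightBounces_reverse (counts_of_InL h1), h2]
  · rintro ⟨h1, h2, h3⟩
    have h1' : InL α β k p := InL_reverse.1 h1
    refine ⟨h1', ?_, ?_⟩
    · rw [rightBounces_reverse (counts_of_InL h1')] at h3; omega
    · rw [leftBounces_reverse (counts_of_InL h1')] at h2; omega

end Atoms

theorem statement5_aux (α β : ℕ) (hα : 0 < α) (hβ : 0 < β) (hcop : Nat.Coprime α β) :
    (∀ ℓ : ℕ, 1 ≤ ℓ →
      BSer α β ℓ 0 = (feeSer α β + fenSer α β) * fenSer α β ^ (ℓ - 1) *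
        (fnnSer α β + fenSer α β)) ∧
    (∀ r : ℕ, 1 ≤ r →
      BSer α β 0 r = (fnnSer α β + fenSer α β) * fenSer α β ^ (r - 1) *
        (feeSer α β + fenSer α β)) := by
  have key : ∀ ℓ : ℕ, 1 ≤ ℓ →
      BSer α β ℓ 0 = (feeSer α β + fenSer α β) * fenSer α β ^ (ℓ - 1) *
        (fnnSer α β + fenSer α β) := by
    intro ℓ hℓ
    obtain ⟨j, rfl⟩ : ∃ j, ℓ = j + 1 := ⟨ℓ - 1, by omega⟩
    rw [BSer_succ_zero hα hcop, gf_TSet hα hcop, Nat.add_sub_cancel]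
    ring
  refine ⟨key, fun r hr => ?_⟩
  rw [BSer_swap, key r hr]
  ring


/-- For `ℓ ≥ 1`, `B_{ℓ,0} = (f_ee+f_en)·f_en^{ℓ−1}·(f_nn+f_en)`,
and for `r ≥ 1`, `B_{0,r} = (f_nn+f_en)·f_en^{r−1}·(f_ee+f_en)`. -/
theorem statement5 (α β : ℕ) (hα : 0 < α) (hβ : 0 < β) (hcop : Nat.Coprime α β) :
    (∀ ℓ : ℕ, 1 ≤ ℓ →
      BSer α β ℓ 0 = (feeSer α β + fenSer α β) * fenSer α β ^ (ℓ - 1) *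
        (fnnSer α β + fenSer α β)) ∧
    (∀ r : ℕ, 1 ≤ r →
      BSer α β 0 r = (fnnSer α β + fenSer α β) * fenSer α β ^ (r - 1) *
        (feeSer α β + fenSer α β)) :=
  statement5_aux α β hα hβ hcop
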